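/- Let n ≥ 3, R > 0 and β > 0, and define G : (0,∞) → ℝ by G(δ) = β / ( (n−2) R^{n−2}/(R+δ)^{n−1} + β ( 1 − R^{n−2}/(R+δ)^{n−2} ) ). Then for every δ > 0, G'(δ) < 0 if and only if δ > (n−1)/β − R, and G'(δ) > 0 if and only if δ < (n−1)/β − R. In particular, if β ≥ (n−1)/R then G is decreasing on (0,∞), while if β < (n−1)/R then G is increasing on (0, (n−1)/β − R) and decreasing on ((n−1)/β − R, ∞). -/

import Mathlib

open Set

/-- Monotonicity analysis of
`G(δ) = β / ((n-2) R^{n-2}/(R+δ)^{n-1} + β (1 - R^{n-2}/(R+δ)^{n-2}))` for `n ≥ 3`: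
`G'(δ) < 0 ↔ δ > (n-1)/β - R` and `G'(δ) > 0 ↔ δ < (n-1)/β - R` on `(0,∞)`; hence `G`
is decreasing on `(0,∞)` when `β ≥ (n-1)/R`, while for `β < (n-1)/R` it is increasing
on `(0, (n-1)/β - R)` and decreasing on `((n-1)/β - R, ∞)`. -/
theorem monotonicity_G_ball
    (n : ℕ) (hn : 3 ≤ n) (R β : ℝ) (hR : 0 < R) (hβ : 0 < β)
    (G : ℝ → ℝ)
    (hG : ∀ δ : ℝ, G δ = β / (((n : ℝ) - 2) * R ^ (n - 2) / (R + δ) ^ (n - 1)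
      + β * (1 - R ^ (n - 2) / (R + δ) ^ (n - 2)))) :
    (∀ δ : ℝ, 0 < δ →
      ((deriv G δ < 0 ↔ ((n : ℝ) - 1) / β - R < δ) ∧
        (0 < deriv G δ ↔ δ < ((n : ℝ) - 1) / β - R))) ∧
    (((n : ℝ) - 1) / R ≤ β → StrictAntiOn G (Set.Ioi 0)) ∧
    (β < ((n : ℝ) - 1) / R →
      StrictMonoOn G (Set.Ioo 0 (((n : ℝ) - 1) / β - R)) ∧
      StrictAntiOn G (Set.Ioi (((n : ℝ) - 1) / β - R))) := by
  obtain ⟨m, rfl⟩ : ∃ m, n = m + 3 := ⟨n - 3, by omega⟩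
  have e2 : m + 3 - 2 = m + 1 := by omega
  have e1 : m + 3 - 1 = m + 2 := by omega
  have hcast : ((m + 3 : ℕ) : ℝ) - 1 = (m : ℝ) + 2 := by push_cast; ring
  set D : ℝ → ℝ := fun δ => ((m : ℝ) + 1) * R ^ (m + 1) / (R + δ) ^ (m + 2)
      + β * (1 - R ^ (m + 1) / (R + δ) ^ (m + 1)) with hDdef
  have hGfun : G = fun δ => β / D δ := by
    funext δ
    rw [hG, hDdef]
    simp only [e1, e2]
    push_cast
    ring_nf
  subst hGfun
  have hDpos : ∀ δ : ℝ, 0 < δ → 0 < D δ := by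
    intro δ hδ
    have hx : 0 < R + δ := by linarith
    have hpow1 : (0:ℝ) < (R + δ) ^ (m + 1) := pow_pos hx _
    have h5 : R ^ (m + 1) < (R + δ) ^ (m + 1) :=
      pow_lt_pow_left₀ (by linarith) hR.le (by omega)
    have h6 : 0 < 1 - R ^ (m + 1) / (R + δ) ^ (m + 1) := by
      rw [sub_pos, div_lt_one hpow1]; exact h5
    simp only [hDdef]
    have : 0 < ((m : ℝ) + 1) * R ^ (m + 1) / (R + δ) ^ (m + 2) := by positivity
    nlinarith [mul_pos hβ h6]
  have key : ∀ δ : ℝ, 0 < δ →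
      HasDerivAt (fun y => β / D y)
        (β * ((m : ℝ) + 1) * R ^ (m + 1) / ((R + δ) ^ (m + 3) * (D δ) ^ 2)
          * (((m : ℝ) + 2) - β * (R + δ))) δ := by
    intro δ hδ
    have hx : 0 < R + δ := by linarith
    have hxne : (R + δ) ≠ 0 := ne_of_gt hx
    have hpow1 : (0:ℝ) < (R + δ) ^ (m + 1) := pow_pos hx _
    have hpow2 : (0:ℝ) < (R + δ) ^ (m + 2) := pow_pos hx _
    have hDp := hDpos δ hδ
    have hDne : D δ ≠ 0 := ne_of_gt hDp
    have hid : HasDerivAt (fun y : ℝ => R + y) 1 δ := (hasDerivAt_id δ).const_add R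
    have h1 := hid.pow (m + 2)
    have h2 := hid.pow (m + 1)
    have hA := (hasDerivAt_const δ (((m : ℝ) + 1) * R ^ (m + 1))).div h1 (ne_of_gt hpow2)
    have hB := (hasDerivAt_const δ (R ^ (m + 1) : ℝ)).div h2 (ne_of_gt hpow1)
    have hBc := ((hasDerivAt_const δ (1:ℝ)).sub hB).const_mul β
    have hDder : HasDerivAt D _ δ := hA.add hBc
    have hGder : HasDerivAt (fun y => β / D y) _ δ := (hasDerivAt_const δ β).div hDder hDne
    convert hGder using 1
    simp only [Pi.pow_apply, Nat.add_sub_cancel, (by omega : m + 2 - 1 = m + 1), Nat.cast_add, Nat.cast_ofNat, Nat.cast_one]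
    field_simp
    ring
  have hkey : ∀ δ : ℝ, 0 < δ →
      (deriv (fun y => β / D y) δ < 0 ↔ ((m : ℝ) + 2) / β - R < δ) ∧
      (0 < deriv (fun y => β / D y) δ ↔ δ < ((m : ℝ) + 2) / β - R) := by
    intro δ hδ
    have hx : 0 < R + δ := by linarith
    have hd := (key δ hδ).deriv
    have hCpos : 0 < β * ((m : ℝ) + 1) * R ^ (m + 1) / ((R + δ) ^ (m + 3) * (D δ) ^ 2) :=
      div_pos (by positivity) (mul_pos (pow_pos hx _) (pow_pos (hDpos δ hδ) 2))
    rw [hd]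
    constructor
    · constructor
      · intro h
        have h2 : ((m : ℝ) + 2) - β * (R + δ) < 0 := by
          by_contra h3
          push_neg at h3
          nlinarith [mul_nonneg hCpos.le h3]
        rw [sub_lt_iff_lt_add, div_lt_iff₀ hβ]
        nlinarith
      · intro h
        have h2 : ((m : ℝ) + 2) < β * (R + δ) := by
          rw [sub_lt_iff_lt_add, div_lt_iff₀ hβ] at h
          nlinarith
        exact mul_neg_of_pos_of_neg hCpos (by linarith)
    · constructor
      · intro h
        have h2 : 0 < ((m : ℝ) + 2) - β * (R + δ) := by
          by_contra h3
          push_neg at h3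
          nlinarith [mul_nonpos_of_nonneg_of_nonpos hCpos.le h3]
        rw [lt_sub_iff_add_lt, lt_div_iff₀ hβ]
        nlinarith
      · intro h
        have h2 : β * (R + δ) < ((m : ℝ) + 2) := by
          rw [lt_sub_iff_add_lt, lt_div_iff₀ hβ] at h
          nlinarith
        exact mul_pos hCpos (by linarith)
  have hcont : ∀ δ : ℝ, 0 < δ → ContinuousWithinAt (fun y => β / D y) (Set.Ioi 0) δ :=
    fun δ hδ => (key δ hδ).differentiableAt.continuousAt.continuousWithinAt
  refine ⟨?_, ?_, ?_⟩
  · intro δ hδ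
    rw [hcast]
    exact hkey δ hδ
  · intro hβR
    rw [hcast] at hβR
    have h1 : (m : ℝ) + 2 ≤ β * R := by
      have := (div_le_iff₀ hR).1 hβR
      nlinarith
    have h2 : ((m : ℝ) + 2) / β ≤ R := (div_le_iff₀ hβ).2 (by nlinarith)
    apply strictAntiOn_of_deriv_neg (convex_Ioi 0)
    · intro y hy; exact (key y hy).differentiableAt.continuousAt.continuousWithinAt
    · rw [interior_Ioi]
      intro y hy
      exact (hkey y hy).1.mpr (by simp only [mem_Ioi] at hy; linarith)
  · intro hβR
    rw [hcast] at hβR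
    rw [hcast]
    have hc : 0 < ((m : ℝ) + 2) / β - R := by
      have := (lt_div_iff₀ hR).1 hβR
      rw [sub_pos, lt_div_iff₀ hβ]
      nlinarith
    constructor
    · apply strictMonoOn_of_deriv_pos (convex_Ioo 0 _)
      · intro y hy
        exact ((key y hy.1).differentiableAt.continuousAt).continuousWithinAt
      · rw [interior_Ioo]
        intro y hy
        exact (hkey y hy.1).2.mpr hy.2
    · apply strictAntiOn_of_deriv_neg (convex_Ioi _)
      · intro y hy
        have hy' : 0 < y := lt_trans hc (mem_Ioi.1 hy)
        exact ((key y hy').differentiableAt.continuousAt).continuousWithinAt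
      · rw [interior_Ioi]
        intro y hy
        have hy' : 0 < y := lt_trans hc hy
        exact (hkey y hy').1.mpr hy
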